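/- Let A be a unital C*-algebra, let φ₁, φ₂, φ₃, φ₄ be positive linear functionals on A with φ_j(1) ≤ 1 for each j, and set φ := φ₁ − φ₂ + i(φ₃ − φ₄) and ψ := φ₁ + φ₂ + φ₃ + φ₄. Let e, f ∈ A be projections with f ≤ e (i.e. e f = f e = f). Then for every x ∈ A with ‖x‖ ≤ 1, |φ(e x e) − φ((e−f) x (e−f))| ≤ 28·(ψ(f))^{1/4}. -/

import Mathlib

open ComplexOrder

namespace Stmt14Aux

variable {A : Type*} [CStarAlgebra A] [PartialOrder A] [StarOrderedRing A]

lemma im_eq_zero (φ : A →ₗ[ℂ] ℂ) (hφ : ∀ b : A, 0 ≤ b → 0 ≤ φ b)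
    {h : A} (hsa : IsSelfAdjoint h) : (φ h).im = 0 := by
  have h1 : 0 ≤ φ (algebraMap ℝ A ‖h‖ - h) :=
    hφ _ (sub_nonneg.2 hsa.le_algebraMap_norm_self)
  have h2 : (φ (algebraMap ℝ A ‖h‖)).im = 0 := by
    have : algebraMap ℝ A ‖h‖ = ((‖h‖ : ℂ)) • (1 : A) := by
      rw [Algebra.algebraMap_eq_smul_one]
      norm_num [← smul_assoc]
    have h3 := (Complex.nonneg_iff.1 (hφ 1 zero_le_one)).2
    rw [this, map_smul]
    simp [Complex.smul_re, Complex.smul_im, ← h3]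
  have h4 := (Complex.nonneg_iff.1 h1).2
  rw [map_sub] at h4
  simp only [Complex.sub_im] at h4
  linarith

lemma star_apply' (φ : A →ₗ[ℂ] ℂ) (hφ : ∀ b : A, 0 ≤ b → 0 ≤ φ b)
    (a : A) : φ (star a) = starRingEnd ℂ (φ a) := by
  have hu : (φ (a + star a)).im = 0 :=
    im_eq_zero φ hφ (by simp [IsSelfAdjoint, star_add, add_comm])
  have hv : (φ (Complex.I • (a - star a))).im = 0 := by
    refine im_eq_zero φ hφ ?_
    simp only [IsSelfAdjoint, star_smul, star_sub, star_star, Complex.star_def,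
      Complex.conj_I, neg_smul, smul_sub, neg_sub]
    abel
  rw [map_add] at hu
  rw [map_smul, map_sub] at hv
  simp only [smul_eq_mul, Complex.mul_im, Complex.add_im, Complex.smul_im, Complex.sub_re,
    Complex.sub_im, Complex.smul_re, Complex.I_re, Complex.I_im] at hu hv
  apply Complex.ext <;> simp only [Complex.conj_re, Complex.conj_im] <;> linarith

noncomputable def core (φ : A →ₗ[ℂ] ℂ) (hφ : ∀ b : A, 0 ≤ b → 0 ≤ φ b) :
    PreInnerProductSpace.Core ℂ A where
  inner a b := φ (star a * b)
  conj_inner_symm x y := by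
    show starRingEnd ℂ (φ (star y * x)) = φ (star x * y)
    rw [← star_apply' φ hφ, star_mul, star_star]
  re_inner_nonneg x := (Complex.nonneg_iff.1 (hφ _ (star_mul_self_nonneg x))).1
  add_left x y z := by simp [star_add, add_mul]
  smul_left x y r := by simp [star_smul, smul_mul_assoc, smul_eq_mul]

lemma cauchy (φ : A →ₗ[ℂ] ℂ) (hφ : ∀ b : A, 0 ≤ b → 0 ≤ φ b) (a b : A) :
    ‖φ (star a * b)‖ ^ 2 ≤ (φ (star a * a)).re * (φ (star b * b)).re := by
  letI c : PreInnerProductSpace.Core ℂ A := core φ hφ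
  have cs := InnerProductSpace.Core.inner_mul_inner_self_le (𝕜 := ℂ) (F := A) a b
  have h1 : ‖φ (star a * b)‖ * ‖φ (star b * a)‖
      ≤ (φ (star a * a)).re * (φ (star b * b)).re := cs
  have h2 : φ (star b * a) = starRingEnd ℂ (φ (star a * b)) := by
    rw [← star_apply' φ hφ, star_mul, star_star]
  rw [h2] at h1
  simpa [sq] using h1

lemma re_mono (φ : A →ₗ[ℂ] ℂ) (hφ : ∀ b : A, 0 ≤ b → 0 ≤ φ b)
    {a b : A} (hab : a ≤ b) : (φ a).re ≤ (φ b).re := by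
  have := (Complex.nonneg_iff.1 (hφ _ (sub_nonneg.2 hab))).1
  rw [map_sub] at this
  simp only [Complex.sub_re] at this
  linarith

lemma proj_nonneg {p : A} (hsa : star p = p) (hidem : p * p = p) : 0 ≤ p := by
  have := star_mul_self_nonneg p
  rwa [hsa, hidem] at this

lemma proj_le_one {p : A} (hsa : star p = p) (hidem : p * p = p) : p ≤ 1 := by
  have h : (0 : A) ≤ 1 - p := by
    have := star_mul_self_nonneg (1 - p)
    have h2 : star (1 - p) * (1 - p) = 1 - p := by
      rw [star_sub, star_one, hsa]
      noncomm_ring [hidem]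
    rwa [h2] at this
  exact sub_nonneg.1 h

lemma proj_norm_le_one {p : A} (hsa : star p = p) (hidem : p * p = p) : ‖p‖ ≤ 1 := by
  have h := CStarRing.norm_star_mul_self (x := p)
  rw [hsa, hidem] at h
  nlinarith [norm_nonneg p]

/-- Key Cauchy–Schwarz estimate: `|φ(p y)| ≤ √(re φ(p))` for a projection `p` and `‖y‖ ≤ 1`. -/
lemma key (φ : A →ₗ[ℂ] ℂ) (hφ : ∀ b : A, 0 ≤ b → 0 ≤ φ b) (hφ1 : φ 1 ≤ 1)
    {p y : A} (hsa : star p = p) (hidem : p * p = p) (hy : ‖y‖ ≤ 1) :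
    ‖φ (p * y)‖ ≤ Real.sqrt ((φ p).re) := by
  have hcs := cauchy φ hφ p y
  rw [hsa, hidem] at hcs
  have hyy : (φ (star y * y)).re ≤ 1 := by
    have h1 : star y * y ≤ (1 : A) := by
      refine (CStarAlgebra.star_mul_le_algebraMap_norm_sq (a := y)).trans ?_
      have hnn : (0:ℝ) ≤ 1 - ‖y‖ ^ 2 := by nlinarith [norm_nonneg y]
      have h0 : (0:A) ≤ algebraMap ℝ A (1 - ‖y‖ ^ 2) := by
        have h1' : algebraMap ℝ A (1 - ‖y‖^2) = star (algebraMap ℝ A (Real.sqrt (1 - ‖y‖^2)))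
            * algebraMap ℝ A (Real.sqrt (1 - ‖y‖^2)) := by
          rw [← algebraMap_star_comm, star_trivial, ← map_mul, Real.mul_self_sqrt hnn]
        rw [h1']
        exact star_mul_self_nonneg _
      have := sub_nonneg.1 (by rwa [map_sub, map_one] at h0)
      exact this
    have h3 := re_mono φ hφ h1
    have h2 : (φ 1).re ≤ 1 := by simpa using (Complex.le_def.1 hφ1).1
    linarith
  have hp0 : 0 ≤ (φ p).re := (Complex.nonneg_iff.1 (hφ p (proj_nonneg hsa hidem))).1
  have hyy0 : 0 ≤ (φ (star y * y)).re :=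
    (Complex.nonneg_iff.1 (hφ _ (star_mul_self_nonneg y))).1
  have habs : ‖φ (p * y)‖ ^ 2 ≤ (φ p).re := by nlinarith
  have := Real.sqrt_le_sqrt habs
  rwa [Real.sqrt_sq (norm_nonneg _)] at this

lemma key' (φ : A →ₗ[ℂ] ℂ) (hφ : ∀ b : A, 0 ≤ b → 0 ≤ φ b) (hφ1 : φ 1 ≤ 1)
    {p y : A} (hsa : star p = p) (hidem : p * p = p) (hy : ‖y‖ ≤ 1) :
    ‖φ (y * p)‖ ≤ Real.sqrt ((φ p).re) := by
  have h := key φ hφ hφ1 hsa hidem (y := star y) (by simpa using hy)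
  have h2 : φ (y * p) = starRingEnd ℂ (φ (p * star y)) := by
    rw [← star_apply' φ hφ]
    congr 1
    rw [star_mul, star_star, hsa]
  rw [h2, Complex.norm_conj]
  exact h

end Stmt14Aux

open Stmt14Aux

/-- Let `φ₁, φ₂, φ₃, φ₄` be positive linear functionals with `φ_j(1) ≤ 1` on a unital
C*-algebra, `φ := φ₁ − φ₂ + i(φ₃ − φ₄)`, `ψ := φ₁ + φ₂ + φ₃ + φ₄`, and let `e, f` be
projections with `f ≤ e` (`e f = f e = f`).  Then for every `x` with `‖x‖ ≤ 1`,
`|φ(e x e) − φ((e−f) x (e−f))| ≤ 28·(ψ(f))^{1/4}`. -/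
theorem stmt14 {A : Type*} [CStarAlgebra A] [PartialOrder A] [StarOrderedRing A]
    (φ₁ φ₂ φ₃ φ₄ : A →ₗ[ℂ] ℂ)
    (h₁ : ∀ b : A, 0 ≤ b → 0 ≤ φ₁ b) (h₂ : ∀ b : A, 0 ≤ b → 0 ≤ φ₂ b)
    (h₃ : ∀ b : A, 0 ≤ b → 0 ≤ φ₃ b) (h₄ : ∀ b : A, 0 ≤ b → 0 ≤ φ₄ b)
    (h₁1 : φ₁ 1 ≤ 1) (h₂1 : φ₂ 1 ≤ 1) (h₃1 : φ₃ 1 ≤ 1) (h₄1 : φ₄ 1 ≤ 1)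
    (e f : A) (he_sa : e = star e) (he_idem : e * e = e)
    (hf_sa : f = star f) (hf_idem : f * f = f)
    (hef : e * f = f) (hfe : f * e = f) :
    ∀ x : A, ‖x‖ ≤ 1 →
      ‖(φ₁ (e * x * e) - φ₂ (e * x * e)
            + Complex.I * (φ₃ (e * x * e) - φ₄ (e * x * e)))
          - (φ₁ ((e - f) * x * (e - f)) - φ₂ ((e - f) * x * (e - f))
            + Complex.I * (φ₃ ((e - f) * x * (e - f)) - φ₄ ((e - f) * x * (e - f))))‖
        ≤ 28 * ((φ₁ f + φ₂ f + φ₃ f + φ₄ f).re) ^ ((1 : ℝ) / 4) := by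
  intro x hx
  -- projection facts
  have hf_sa' : star f = f := hf_sa.symm
  have hefsa : star (e - f) = e - f := by rw [star_sub, ← he_sa, ← hf_sa]
  have hefidem : (e - f) * (e - f) = e - f := by
    have h : (e - f) * (e - f) = e * e - e * f - f * e + f * f := by noncomm_ring
    rw [h, he_idem, hef, hfe, hf_idem]
    abel
  have hne : ‖e‖ ≤ 1 := proj_norm_le_one he_sa.symm he_idem
  have hnef : ‖e - f‖ ≤ 1 := proj_norm_le_one hefsa hefidem
  have hxe : ‖x * e‖ ≤ 1 := by
    calc ‖x * e‖ ≤ ‖x‖ * ‖e‖ := norm_mul_le _ _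
      _ ≤ 1 := by nlinarith [norm_nonneg x, norm_nonneg e]
  have hefx : ‖(e - f) * x‖ ≤ 1 := by
    calc ‖(e - f) * x‖ ≤ ‖e - f‖ * ‖x‖ := norm_mul_le _ _
      _ ≤ 1 := by nlinarith [norm_nonneg x, norm_nonneg (e - f)]
  -- the algebraic identity
  have hid : e * x * e - (e - f) * x * (e - f) = f * (x * e) + ((e - f) * x) * f := by
    noncomm_ring
  have hdj : ∀ φ : A →ₗ[ℂ] ℂ, φ (e * x * e) - φ ((e - f) * x * (e - f))
      = φ (f * (x * e)) + φ (((e - f) * x) * f) := fun φ => by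
    rw [← map_sub, hid, map_add]
  -- the bound for a single positive functional
  have hbound : ∀ φ : A →ₗ[ℂ] ℂ, (∀ b : A, 0 ≤ b → 0 ≤ φ b) → φ 1 ≤ 1 →
      ‖φ (e * x * e) - φ ((e - f) * x * (e - f))‖
        ≤ 2 * Real.sqrt ((φ f).re) := by
    intro φ hφ hφ1
    rw [hdj φ]
    calc ‖φ (f * (x * e)) + φ (((e - f) * x) * f)‖
        ≤ ‖φ (f * (x * e))‖ + ‖φ (((e - f) * x) * f)‖ :=
          norm_add_le _ _
      _ ≤ Real.sqrt ((φ f).re) + Real.sqrt ((φ f).re) :=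
          add_le_add (key φ hφ hφ1 hf_sa' hf_idem hxe)
            (key' φ hφ hφ1 hf_sa' hf_idem hefx)
      _ = 2 * Real.sqrt ((φ f).re) := by ring
  set T : ℝ := (φ₁ f + φ₂ f + φ₃ f + φ₄ f).re with hT
  have hfnn : ∀ φ : A →ₗ[ℂ] ℂ, (∀ b : A, 0 ≤ b → 0 ≤ φ b) → 0 ≤ (φ f).re := fun φ hφ =>
    (Complex.nonneg_iff.1 (hφ f (proj_nonneg hf_sa' hf_idem))).1
  have hTsum : T = (φ₁ f).re + (φ₂ f).re + (φ₃ f).re + (φ₄ f).re := by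
    simp [hT, Complex.add_re]
  have hT0 : 0 ≤ T := by
    have := hfnn φ₁ h₁; have := hfnn φ₂ h₂; have := hfnn φ₃ h₃; have := hfnn φ₄ h₄
    rw [hTsum]; linarith
  -- T ≤ 4
  have hfle1 : ∀ φ : A →ₗ[ℂ] ℂ, (∀ b : A, 0 ≤ b → 0 ≤ φ b) → φ 1 ≤ 1 → (φ f).re ≤ 1 := by
    intro φ hφ hφ1
    have h5 := re_mono φ hφ (proj_le_one hf_sa' hf_idem)
    have h6 : (φ 1).re ≤ 1 := by simpa using (Complex.le_def.1 hφ1).1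
    linarith
  have hT4 : T ≤ 4 := by
    have := hfle1 φ₁ h₁ h₁1; have := hfle1 φ₂ h₂ h₂1
    have := hfle1 φ₃ h₃ h₃1; have := hfle1 φ₄ h₄ h₄1
    rw [hTsum]; linarith
  -- combine the four functionals
  have hsq : ∀ φ : A →ₗ[ℂ] ℂ, (∀ b : A, 0 ≤ b → 0 ≤ φ b) → φ 1 ≤ 1 →
      (φ f).re ≤ T →
      ‖φ (e * x * e) - φ ((e - f) * x * (e - f))‖ ≤ 2 * Real.sqrt T := by
    intro φ hφ hφ1 hfT
    refine (hbound φ hφ hφ1).trans ?_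
    have := Real.sqrt_le_sqrt hfT
    linarith
  have hn1 := hfnn φ₁ h₁; have hn2 := hfnn φ₂ h₂
  have hn3 := hfnn φ₃ h₃; have hn4 := hfnn φ₄ h₄
  have hb1 := hsq φ₁ h₁ h₁1 (by rw [hTsum]; linarith)
  have hb2 := hsq φ₂ h₂ h₂1 (by rw [hTsum]; linarith)
  have hb3 := hsq φ₃ h₃ h₃1 (by rw [hTsum]; linarith)
  have hb4 := hsq φ₄ h₄ h₄1 (by rw [hTsum]; linarith)
  set d₁ := φ₁ (e * x * e) - φ₁ ((e - f) * x * (e - f)) with hd1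
  set d₂ := φ₂ (e * x * e) - φ₂ ((e - f) * x * (e - f)) with hd2
  set d₃ := φ₃ (e * x * e) - φ₃ ((e - f) * x * (e - f)) with hd3
  set d₄ := φ₄ (e * x * e) - φ₄ ((e - f) * x * (e - f)) with hd4
  have hexpr : (φ₁ (e * x * e) - φ₂ (e * x * e)
            + Complex.I * (φ₃ (e * x * e) - φ₄ (e * x * e)))
          - (φ₁ ((e - f) * x * (e - f)) - φ₂ ((e - f) * x * (e - f))
            + Complex.I * (φ₃ ((e - f) * x * (e - f)) - φ₄ ((e - f) * x * (e - f))))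
      = (d₁ - d₂) + Complex.I * (d₃ - d₄) := by
    rw [hd1, hd2, hd3, hd4]; ring
  rw [hexpr]
  have htri : ‖(d₁ - d₂) + Complex.I * (d₃ - d₄)‖
      ≤ ‖d₁‖ + ‖d₂‖ + ‖d₃‖ + ‖d₄‖ := by
    calc ‖(d₁ - d₂) + Complex.I * (d₃ - d₄)‖
        ≤ ‖d₁ - d₂‖ + ‖Complex.I * (d₃ - d₄)‖ :=
          norm_add_le _ _
      _ = ‖d₁ - d₂‖ + ‖d₃ - d₄‖ := by
          rw [norm_mul, Complex.norm_I, one_mul]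
      _ ≤ (‖d₁‖ + ‖d₂‖) + (‖d₃‖ + ‖d₄‖) :=
          add_le_add (by simpa using norm_sub_le d₁ d₂)
            (by simpa using norm_sub_le d₃ d₄)
      _ = ‖d₁‖ + ‖d₂‖ + ‖d₃‖ + ‖d₄‖ := by ring
  have h8 : ‖(d₁ - d₂) + Complex.I * (d₃ - d₄)‖ ≤ 8 * Real.sqrt T := by
    linarith
  refine h8.trans ?_
  -- numeric: 8 √T ≤ 28 T^{1/4}
  have hq0 : 0 ≤ T ^ ((1:ℝ)/4) := Real.rpow_nonneg hT0 _
  have hq2 : T ^ ((1:ℝ)/4) ≤ 2 := by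
    have h16 : (16:ℝ) ^ ((1:ℝ)/4) = 2 := by
      rw [show (16:ℝ) = 2 ^ (4:ℕ) by norm_num, ← Real.rpow_natCast 2 4,
        ← Real.rpow_mul (by norm_num)]
      norm_num
    calc T ^ ((1:ℝ)/4) ≤ (16:ℝ) ^ ((1:ℝ)/4) :=
          Real.rpow_le_rpow hT0 (by linarith) (by norm_num)
      _ = 2 := h16
  have hsqrtT : Real.sqrt T = T ^ ((1:ℝ)/4) * T ^ ((1:ℝ)/4) := by
    rw [Real.sqrt_eq_rpow, ← Real.rpow_add' hT0 (by norm_num)]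
    norm_num
  rw [hsqrtT]
  nlinarith [hq0, hq2]
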